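/- Let 𝔎 ∈ C¹([-1,1]) satisfy 𝔎 ≤ c₀ < 0 for some constant c₀ < 0. Let γ(s) = (x(s), θ(s)) be the maximal solution of x' = cos θ, θ' = x𝔎(cos θ)/sin θ with γ(0) = (x₀, π/2), x₀ > 0, defined for s in a maximal interval. Then for s > 0 in the domain, x(s) is strictly increasing and θ(s) is strictly decreasing, and θ(s) cannot converge to any θ₀ ∈ (0, π/2] while x(s) → ∞; i.e., the orbit reaches θ → 0 with x bounded: there exist s₀ ∈ (0,∞] and x₀¹ ∈ (x₀, ∞) with θ(s) → 0 and x(s) → x₀¹ as s → s₀. -/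

import Mathlib

open Real Filter Set

lemma aux_evt_lt {f : ℝ → ℝ} {a d : ℝ} (hf : HasDerivAt f d a) (hd : d < 0) :
    (∀ᶠ s in nhdsWithin a (Set.Ioi a), f s < f a) ∧
    (∀ᶠ s in nhdsWithin a (Set.Iio a), f a < f s) := by
  have h := hasDerivAt_iff_tendsto_slope.mp hf
  have hs : ∀ᶠ s in nhdsWithin a {a}ᶜ, slope f a s < 0 := h.eventually_lt_const hd
  constructor
  · have h1 : ∀ᶠ s in nhdsWithin a (Set.Ioi a), slope f a s < 0 :=
      hs.filter_mono (nhdsWithin_mono a (fun s hs => ne_of_gt hs))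
    filter_upwards [h1, self_mem_nhdsWithin] with s h1 h2
    have := mul_neg_of_neg_of_pos h1 (sub_pos.mpr (mem_Ioi.mp h2))
    rw [slope_def_field, div_mul_cancel₀] at this
    · linarith
    · exact sub_ne_zero.mpr (ne_of_gt (mem_Ioi.mp h2))
  · have h1 : ∀ᶠ s in nhdsWithin a (Set.Iio a), slope f a s < 0 :=
      hs.filter_mono (nhdsWithin_mono a (fun s hs => ne_of_lt hs))
    filter_upwards [h1, self_mem_nhdsWithin] with s h1 h2
    have := mul_pos_of_neg_of_neg h1 (sub_neg.mpr (mem_Iio.mp h2))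
    rw [slope_def_field, div_mul_cancel₀] at this
    · linarith
    · exact sub_ne_zero.mpr (ne_of_lt (mem_Iio.mp h2))

theorem negative_K_orbit_behavior (𝔎 : ℝ → ℝ)
    (h𝔎 : ContDiffOn ℝ 1 𝔎 (Set.Icc (-1) 1))
    (c₀ : ℝ) (hc₀ : c₀ < 0) (hle : ∀ y ∈ Set.Icc (-1:ℝ) 1, 𝔎 y ≤ c₀)
    (x₀ : ℝ) (hx₀ : 0 < x₀) (x θ : ℝ → ℝ) (D : Set ℝ)
    (hD : D = Set.Ici (0:ℝ) ∨ ∃ b : ℝ, 0 < b ∧ D = Set.Ico 0 b)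
    (hsol : ∀ s ∈ D, 0 ≤ x s ∧ θ s ∈ Set.Ioo 0 π ∧
      HasDerivAt x (Real.cos (θ s)) s ∧
      HasDerivAt θ (x s * 𝔎 (Real.cos (θ s)) / Real.sin (θ s)) s)
    (hinitx : x 0 = x₀) (hinitθ : θ 0 = π / 2)
    (hmax : ∀ (x' θ' : ℝ → ℝ) (D' : Set ℝ), D ⊆ D' →
      (D' = Set.Ici (0:ℝ) ∨ ∃ b : ℝ, 0 < b ∧ D' = Set.Ico 0 b) →
      (∀ s ∈ D', 0 ≤ x' s ∧ θ' s ∈ Set.Ioo 0 π ∧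
        HasDerivAt x' (Real.cos (θ' s)) s ∧
        HasDerivAt θ' (x' s * 𝔎 (Real.cos (θ' s)) / Real.sin (θ' s)) s) →
      Set.EqOn x x' D → Set.EqOn θ θ' D → D' = D) :
    StrictMonoOn x (D ∩ Set.Ioi 0) ∧ StrictAntiOn θ (D ∩ Set.Ioi 0) ∧
    ∃ l : Filter ℝ,
      (l = atTop ∨ ∃ s₀ : ℝ, 0 < s₀ ∧ l = nhdsWithin s₀ (Set.Iio s₀)) ∧
      Tendsto θ l (nhds 0) ∧ ∃ x₁ : ℝ, x₀ < x₁ ∧ Tendsto x l (nhds x₁) := by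
  -- D contains [0, s] for any s ∈ D
  have hDsub : ∀ {s : ℝ}, s ∈ D → Set.Icc 0 s ⊆ D := by
    intro s hs t ht
    rcases hD with h | ⟨b, hb, h⟩
    · rw [h]; exact ht.1
    · rw [h] at hs ⊢; exact ⟨ht.1, lt_of_le_of_lt ht.2 hs.2⟩
  have h0D : (0:ℝ) ∈ D := by
    rcases hD with h | ⟨b, hb, h⟩
    · rw [h]; exact Set.mem_Ici.mpr le_rfl
    · rw [h]; exact ⟨le_refl 0, hb⟩
  have hK0 : 𝔎 0 < 0 := lt_of_le_of_lt (hle 0 ⟨by norm_num, by norm_num⟩) hc₀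
  have hKneg : ∀ s ∈ D, 𝔎 (Real.cos (θ s)) ≤ c₀ := fun s hs =>
    hle _ ⟨neg_one_le_cos _, cos_le_one _⟩
  have hsin_pos : ∀ s ∈ D, 0 < Real.sin (θ s) := fun s hs =>
    Real.sin_pos_of_pos_of_lt_pi ((hsol s hs).2.1).1 ((hsol s hs).2.1).2
  have hsin_le : ∀ s : ℝ, Real.sin (θ s) ≤ 1 := fun s => sin_le_one _
  -- derivative of θ is negative whenever x is positive
  have hθd_neg : ∀ s ∈ D, 0 < x s → x s * 𝔎 (Real.cos (θ s)) / Real.sin (θ s) < 0 := by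
    intro s hs hx
    exact div_neg_of_neg_of_pos
      (mul_neg_of_pos_of_neg hx (lt_of_le_of_lt (hKneg s hs) hc₀)) (hsin_pos s hs)
  -- Part A : θ < π/2 for positive times
  have hA : ∀ s ∈ D, 0 < s → θ s < π/2 := by
    by_contra hcon
    push_neg at hcon
    obtain ⟨s₁, hs₁D, hs₁pos, hs₁θ⟩ := hcon
    set S : Set ℝ := {s | s ∈ D ∧ 0 < s ∧ π/2 ≤ θ s} with hS
    have hSne : S.Nonempty := ⟨s₁, hs₁D, hs₁pos, hs₁θ⟩
    have hSbdd : BddBelow S := ⟨0, fun s hs => hs.2.1.le⟩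
    set T := sInf S with hT
    -- θ < π/2 just after 0
    have hd0 : HasDerivAt θ (x₀ * 𝔎 0) 0 := by
      have := (hsol 0 h0D).2.2.2
      rwa [hinitx, hinitθ, Real.cos_pi_div_two, Real.sin_pi_div_two, div_one] at this
    have hev := (aux_evt_lt hd0 (mul_neg_of_pos_of_neg hx₀ hK0)).1
    rw [hinitθ] at hev
    obtain ⟨ε, hε, hεsub⟩ := (nhdsGT_basis (0:ℝ)).eventually_iff.mp hev
    -- every element of S is ≥ ε
    have hεS : ∀ s ∈ S, ε ≤ s := by
      intro s hs
      by_contra hlt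
      push_neg at hlt
      exact absurd (hεsub ⟨hs.2.1, hlt⟩) (not_lt.mpr hs.2.2)
    have hTpos : 0 < T := lt_of_lt_of_le hε (le_csInf hSne hεS)
    have hTD : T ∈ D := by
      obtain ⟨s₁', h1, h2, h3⟩ := hSne
      exact hDsub h1 ⟨hTpos.le, csInf_le hSbdd ⟨h1, h2, h3⟩⟩
    -- θ < π/2 strictly before T
    have hbefore : ∀ s ∈ D, 0 < s → s < T → θ s < π/2 := by
      intro s hs hpos hsT
      by_contra hge
      push_neg at hge
      exact absurd (csInf_le hSbdd ⟨hs, hpos, hge⟩) (not_le.mpr hsT)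
    have hcθT : ContinuousAt θ T := (hsol T hTD).2.2.2.continuousAt
    -- θ T = π / 2
    have hθT : θ T = π/2 := by
      refine le_antisymm ?_ ?_
      · -- limit from the left
        have htends : Tendsto θ (nhdsWithin T (Set.Iio T)) (nhds (θ T)) :=
          hcθT.continuousWithinAt.tendsto
        refine le_of_tendsto htends ?_
        filter_upwards [Ioo_mem_nhdsLT hTpos, self_mem_nhdsWithin] with s h1 h2
        exact (hbefore s (hDsub hTD ⟨h1.1.le, le_of_lt h2⟩) h1.1 h2).le
      · -- else all of S is ≥ T + δ
        by_contra hlt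
        push_neg at hlt
        have : ∀ᶠ s in nhds T, θ s < π/2 := hcθT.eventually_lt_const hlt
        obtain ⟨δ, hδ, hball⟩ := Metric.eventually_nhds_iff_ball.mp this
        obtain ⟨s, hsS, hsδ⟩ := (csInf_lt_iff hSbdd hSne).mp (show T < T + δ by linarith)
        have hTle : T ≤ s := csInf_le hSbdd hsS
        have : s ∈ Metric.ball T δ := by
          rw [Metric.mem_ball, Real.dist_eq, abs_lt]; constructor <;> linarith
        exact absurd (hball s this) (not_lt.mpr hsS.2.2)
    -- x T > x₀ via strict monotonicity on [0, T]
    have hxT : x₀ < x T := by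
      have hmono : StrictMonoOn x (Set.Icc 0 T) := by
        apply strictMonoOn_of_deriv_pos (convex_Icc 0 T)
        · intro s hs
          exact ((hsol s (hDsub hTD hs)).2.2.1.continuousAt).continuousWithinAt
        · intro s hs
          rw [interior_Icc] at hs
          have hsD := hDsub hTD ⟨hs.1.le, hs.2.le⟩
          rw [(hsol s hsD).2.2.1.deriv]
          have h1 : θ s < π/2 := hbefore s hsD hs.1 hs.2
          exact Real.cos_pos_of_mem_Ioo ⟨by linarith [((hsol s hsD).2.1).1, pi_pos], h1⟩
      have := hmono ⟨le_refl 0, hTpos.le⟩ ⟨hTpos.le, le_refl T⟩ hTpos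
      rwa [hinitx] at this
    -- θ' T < 0 but θ increases to π/2 at T from the left : contradiction
    have hdT : HasDerivAt θ (x T * 𝔎 0) T := by
      have := (hsol T hTD).2.2.2
      rwa [hθT, Real.cos_pi_div_two, Real.sin_pi_div_two, div_one] at this
    have hev2 := (aux_evt_lt hdT (mul_neg_of_pos_of_neg (lt_trans hx₀ hxT) hK0)).2
    rw [hθT] at hev2
    have hev3 : ∀ᶠ s in nhdsWithin T (Set.Iio T), θ s < π/2 := by
      filter_upwards [Ioo_mem_nhdsLT hTpos, self_mem_nhdsWithin] with s h1 h2
      exact hbefore s (hDsub hTD ⟨h1.1.le, le_of_lt h2⟩) h1.1 h2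
    obtain ⟨s, h1, h2⟩ := (hev2.and hev3).exists
    linarith
  -- Part B : monotonicity helpers
  have hxmono : ∀ a b : ℝ, 0 ≤ a → a < b → b ∈ D → x a < x b := by
    intro a b ha hab hbD
    have hm : StrictMonoOn x (Set.Icc a b) := by
      apply strictMonoOn_of_deriv_pos (convex_Icc a b)
      · intro s hs
        exact ((hsol s (hDsub hbD ⟨le_trans ha hs.1, hs.2⟩)).2.2.1.continuousAt).continuousWithinAt
      · intro s hs
        rw [interior_Icc] at hs
        have hsD := hDsub hbD ⟨le_trans ha hs.1.le, hs.2.le⟩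
        have hspos : 0 < s := lt_of_le_of_lt ha hs.1
        rw [(hsol s hsD).2.2.1.deriv]
        exact Real.cos_pos_of_mem_Ioo ⟨by linarith [((hsol s hsD).2.1).1, pi_pos],
          hA s hsD hspos⟩
    exact hm ⟨le_rfl, hab.le⟩ ⟨hab.le, le_rfl⟩ hab
  have hxgt : ∀ s ∈ D, 0 < s → x₀ < x s := fun s hs hpos => by
    have := hxmono 0 s le_rfl hpos hs; rwa [hinitx] at this
  have hxpos : ∀ s ∈ D, 0 < s → 0 < x s := fun s hs hpos => lt_trans hx₀ (hxgt s hs hpos)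
  have hθanti : ∀ a b : ℝ, 0 ≤ a → a < b → b ∈ D → θ b < θ a := by
    intro a b ha hab hbD
    have hm : StrictAntiOn θ (Set.Icc a b) := by
      apply strictAntiOn_of_deriv_neg (convex_Icc a b)
      · intro s hs
        exact ((hsol s (hDsub hbD ⟨le_trans ha hs.1, hs.2⟩)).2.2.2.continuousAt).continuousWithinAt
      · intro s hs
        rw [interior_Icc] at hs
        have hsD := hDsub hbD ⟨le_trans ha hs.1.le, hs.2.le⟩
        have hspos : 0 < s := lt_of_le_of_lt ha hs.1
        rw [(hsol s hsD).2.2.2.deriv]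
        exact hθd_neg s hsD (hxpos s hsD hspos)
    exact hm ⟨le_rfl, hab.le⟩ ⟨hab.le, le_rfl⟩ hab
  have hBx : StrictMonoOn x (D ∩ Set.Ioi 0) := fun a ha b hb hab =>
    hxmono a b (le_of_lt ha.2) hab hb.1
  have hBθ : StrictAntiOn θ (D ∩ Set.Ioi 0) := fun a ha b hb hab =>
    hθanti a b (le_of_lt ha.2) hab hb.1
  refine ⟨hBx, hBθ, ?_⟩
  -- Part C : the maximal interval is bounded
  have hbD : ∃ b : ℝ, 0 < b ∧ D = Set.Ico 0 b := by
    rcases hD with hIci | h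
    · exfalso
      have hmemIci : ∀ s : ℝ, 0 ≤ s → s ∈ D := fun s hs => by
        rw [hIci]; exact Set.mem_Ici.mpr hs
      have h1D : (1:ℝ) ∈ D := hmemIci 1 zero_le_one
      have hx1 : 0 < x 1 := hxpos 1 h1D one_pos
      obtain ⟨C, hC⟩ : ∃ C : ℝ, C = x 1 * c₀ := ⟨_, rfl⟩
      have hCneg : C < 0 := by rw [hC]; exact mul_neg_of_pos_of_neg hx1 hc₀
      have hkey : ∀ s : ℝ, 1 < s → x s * 𝔎 (Real.cos (θ s)) / Real.sin (θ s) ≤ C := by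
        intro s hs
        have hsD : s ∈ D := hmemIci s (by linarith)
        have hx1s : x 1 ≤ x s := (hxmono 1 s zero_le_one hs hsD).le
        have hnum : x s * 𝔎 (Real.cos (θ s)) ≤ C := by
          calc x s * 𝔎 (Real.cos (θ s)) ≤ x s * c₀ :=
                mul_le_mul_of_nonneg_left (hKneg s hsD) (hsol s hsD).1
            _ ≤ x 1 * c₀ := mul_le_mul_of_nonpos_right hx1s hc₀.le
            _ = C := hC.symm
        have h2 : x s * 𝔎 (Real.cos (θ s)) / Real.sin (θ s) ≤ x s * 𝔎 (Real.cos (θ s)) := by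
          rw [div_le_iff₀ (hsin_pos s hsD)]
          nlinarith [hsin_le s, hsin_pos s hsD, le_trans hnum hCneg.le]
        linarith
      have hderiv : ∀ s : ℝ, 1 ≤ s → HasDerivAt (fun u => θ u - C * u)
          (x s * 𝔎 (Real.cos (θ s)) / Real.sin (θ s) - C) s := by
        intro s hs
        have hsD : s ∈ D := hmemIci s (by linarith)
        have h2 : HasDerivAt (fun u : ℝ => C * u) C s := by
          simpa using (hasDerivAt_id s).const_mul C
        exact (hsol s hsD).2.2.2.sub h2
      have hg : AntitoneOn (fun s => θ s - C * s) (Set.Ici 1) := by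
        apply antitoneOn_of_deriv_nonpos (convex_Ici 1)
        · intro s hs
          exact ((hderiv s (Set.mem_Ici.mp hs)).continuousAt).continuousWithinAt
        · intro s hs
          rw [interior_Ici] at hs
          exact ((hderiv s (Set.mem_Ioi.mp hs).le).differentiableAt.differentiableWithinAt)
        · intro s hs
          rw [interior_Ici] at hs
          rw [(hderiv s (Set.mem_Ioi.mp hs).le).deriv]
          linarith [hkey s (Set.mem_Ioi.mp hs)]
      obtain ⟨s₂, hs₂def⟩ : ∃ t : ℝ, t = 1 + (θ 1 + 1)/(-C) := ⟨_, rfl⟩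
      have hθ1pos : 0 < θ 1 := ((hsol 1 h1D).2.1).1
      have hfrac : 0 ≤ (θ 1 + 1)/(-C) := div_nonneg (by linarith) (by linarith)
      have hs₂ : (1:ℝ) ≤ s₂ := by rw [hs₂def]; linarith
      have hgle : θ s₂ - C * s₂ ≤ θ 1 - C * 1 :=
        hg (Set.mem_Ici.mpr le_rfl) (Set.mem_Ici.mpr hs₂) hs₂
      have hCne : C ≠ 0 := ne_of_lt hCneg
      have hCs₂ : C * s₂ = C - (θ 1 + 1) := by
        rw [hs₂def, mul_add, mul_one, mul_div_assoc', mul_comm, mul_div_assoc,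
          div_neg, div_self hCne]
        ring
      have hθs₂pos : 0 < θ s₂ := ((hsol s₂ (hmemIci s₂ (by linarith))).2.1).1
      rw [hCs₂] at hgle
      linarith
    · exact h
  obtain ⟨b, hb, hDico⟩ := hbD
  -- Part D : limits at the right endpoint
  have hmemIoo : ∀ s ∈ Set.Ioo (0:ℝ) b, s ∈ D := fun s hs => by
    rw [hDico]; exact ⟨hs.1.le, hs.2⟩
  have hb2 : b/2 ∈ Set.Ioo (0:ℝ) b := ⟨by linarith, by linarith⟩
  have hne : (Set.Ioo (0:ℝ) b).Nonempty := ⟨b/2, hb2⟩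
  have hθanti' : AntitoneOn θ (Set.Ioo 0 b) := by
    intro p hp q hq hpq
    rcases eq_or_lt_of_le hpq with rfl | h
    · exact le_rfl
    · exact (hθanti p q hp.1.le h (hmemIoo _ hq)).le
  have hθbdd : BddBelow (θ '' Set.Ioo 0 b) := by
    refine ⟨0, fun y hy => ?_⟩
    obtain ⟨s, hs, rfl⟩ := hy
    exact ((hsol s (hmemIoo s hs)).2.1).1.le
  have hθtend : Tendsto θ (nhdsWithin b (Set.Iio b)) (nhds (sInf (θ '' Set.Ioo 0 b))) :=
    AntitoneOn.tendsto_nhdsWithin_Ioo_left hne hθanti' hθbdd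
  have hθL0 : 0 ≤ sInf (θ '' Set.Ioo 0 b) := by
    refine le_csInf (hne.image θ) fun y hy => ?_
    obtain ⟨s, hs, rfl⟩ := hy
    exact ((hsol s (hmemIoo s hs)).2.1).1.le
  have hθLle : ∀ s ∈ Set.Ioo (0:ℝ) b, sInf (θ '' Set.Ioo 0 b) ≤ θ s := fun s hs =>
    csInf_le hθbdd (Set.mem_image_of_mem _ hs)
  -- x is bounded above by x₀ + b
  have hxub : ∀ s ∈ Set.Ioo (0:ℝ) b, x s ≤ x₀ + b := by
    intro s hs
    have hdg : ∀ u ∈ Set.Icc 0 s, HasDerivAt (fun w : ℝ => w - x w) (1 - Real.cos (θ u)) u :=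
      fun u hu => (hasDerivAt_id u).sub (hsol u (hDsub (hmemIoo s hs) hu)).2.2.1
    have hmono : MonotoneOn (fun u => u - x u) (Set.Icc 0 s) := by
      apply monotoneOn_of_deriv_nonneg (convex_Icc 0 s)
      · exact fun u hu => ((hdg u hu).continuousAt).continuousWithinAt
      · intro u hu
        rw [interior_Icc] at hu
        exact ((hdg u ⟨hu.1.le, hu.2.le⟩).differentiableAt).differentiableWithinAt
      · intro u hu
        rw [interior_Icc] at hu
        rw [(hdg u ⟨hu.1.le, hu.2.le⟩).deriv]
        linarith [Real.cos_le_one (θ u)]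
    have := hmono ⟨le_rfl, hs.1.le⟩ ⟨hs.1.le, le_rfl⟩ hs.1.le
    simp only at this
    rw [hinitx] at this
    have : 0 - x₀ ≤ s - x s := by simpa using this
    linarith [hs.2]
  have hxmono' : MonotoneOn x (Set.Ioo 0 b) := by
    intro p hp q hq hpq
    rcases eq_or_lt_of_le hpq with rfl | h
    · exact le_rfl
    · exact (hxmono p q hp.1.le h (hmemIoo _ hq)).le
  have hxbdd : BddAbove (x '' Set.Ioo 0 b) := by
    refine ⟨x₀ + b, fun y hy => ?_⟩
    obtain ⟨s, hs, rfl⟩ := hy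
    exact hxub s hs
  have hxtend : Tendsto x (nhdsWithin b (Set.Iio b)) (nhds (sSup (x '' Set.Ioo 0 b))) :=
    MonotoneOn.tendsto_nhdsWithin_Ioo_left hne hxmono' hxbdd
  have hx₁gt : x₀ < sSup (x '' Set.Ioo 0 b) :=
    lt_of_lt_of_le (hxgt (b/2) (hmemIoo _ hb2) hb2.1)
      (le_csSup hxbdd (Set.mem_image_of_mem _ hb2))
  -- Part E : the θ-limit is 0
  have hθL_eq : sInf (θ '' Set.Ioo 0 b) = 0 := by
    by_contra hne0
    obtain ⟨θL, hθLdef⟩ : ∃ t : ℝ, t = sInf (θ '' Set.Ioo 0 b) := ⟨_, rfl⟩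
    obtain ⟨x₁, hx₁def⟩ : ∃ t : ℝ, t = sSup (x '' Set.Ioo 0 b) := ⟨_, rfl⟩
    rw [← hθLdef] at hθtend hθL0 hθLle hne0
    rw [← hx₁def] at hxtend hx₁gt
    have hθLpos : 0 < θL := lt_of_le_of_ne hθL0 (Ne.symm hne0)
    have hθLlt : θL < π/2 := lt_of_le_of_lt (hθLle (b/2) hb2) (hA (b/2) (hmemIoo _ hb2) hb2.1)
    have hsinL : 0 < Real.sin θL :=
      Real.sin_pos_of_pos_of_lt_pi hθLpos (by linarith [Real.pi_pos])
    have hcosmem : Real.cos θL ∈ Set.Ioo (-1:ℝ) 1 := by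
      constructor
      · have := Real.cos_pos_of_mem_Ioo
          (show θL ∈ Set.Ioo (-(π/2)) (π/2) from ⟨by linarith, hθLlt⟩)
        linarith
      · have := Real.cos_lt_cos_of_nonneg_of_le_pi le_rfl (by linarith [Real.pi_pos]) hθLpos
        rw [Real.cos_zero] at this
        exact this
    set p₁ : ℝ × ℝ := (x₁, θL) with hp₁
    set v : ℝ × ℝ → ℝ × ℝ := fun p => (Real.cos p.2, p.1 * 𝔎 (Real.cos p.2) / Real.sin p.2)
      with hvdef
    have hvc : ContDiffAt ℝ 1 v p₁ := by
      apply ContDiffAt.prodMk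
      · exact (Real.contDiff_cos.contDiffAt).comp p₁ contDiffAt_snd
      · apply ContDiffAt.div
        · exact contDiffAt_fst.mul ((h𝔎.contDiffAt (Icc_mem_nhds hcosmem.1 hcosmem.2)).comp p₁
            ((Real.contDiff_cos.contDiffAt).comp p₁ contDiffAt_snd))
        · exact (Real.contDiff_sin.contDiffAt).comp p₁ contDiffAt_snd
        · exact ne_of_gt hsinL
    obtain ⟨K, tset, htmem, hlip⟩ := hvc.exists_lipschitzOnWith
    obtain ⟨f, hfb, ε, hε, hf⟩ := hvc.exists_forall_mem_closedBall_exists_eq_forall_mem_Ioo_hasDerivAt₀ b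
    have hbIoo : b ∈ Set.Ioo (b - ε) (b + ε) := ⟨by linarith, by linarith⟩
    have hfc : ∀ u ∈ Set.Ioo (b - ε) (b + ε), ContinuousAt f u :=
      fun u hu => (hf u hu).continuousAt
    have hpair : Tendsto (fun s => (x s, θ s)) (nhdsWithin b (Set.Iio b)) (nhds p₁) :=
      hxtend.prodMk_nhds hθtend
    have e1 : ∀ᶠ s in nhdsWithin b (Set.Iio b), (x s, θ s) ∈ tset :=
      hpair.eventually_mem htmem
    have hcfb : Tendsto f (nhds b) (nhds p₁) := by
      rw [← hfb]; exact (hfc b hbIoo).tendsto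
    have e2 : ∀ᶠ s in nhdsWithin b (Set.Iio b), f s ∈ tset :=
      (hcfb.eventually_mem htmem).filter_mono nhdsWithin_le_nhds
    obtain ⟨a, ha, hsub⟩ := mem_nhdsLT_iff_exists_Ioo_subset.mp (e1.and e2)
    obtain ⟨a', ha'def⟩ : ∃ t : ℝ, t = max a (max (b - ε/2) (b/2)) := ⟨_, rfl⟩
    have ha'b : a' < b := by
      rw [ha'def]
      exact max_lt (Set.mem_Iio.mp ha) (max_lt (by linarith) (by linarith))
    have ha'ge1 : b - ε/2 ≤ a' := ha'def ▸ le_max_of_le_right (le_max_left _ _)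
    have ha'ge2 : b/2 ≤ a' := ha'def ▸ le_max_of_le_right (le_max_right _ _)
    have ha'gea : a ≤ a' := ha'def ▸ le_max_left _ _
    have hmemt : ∀ s ∈ Set.Ioo a' b, (x s, θ s) ∈ tset ∧ f s ∈ tset := fun s hs =>
      hsub ⟨lt_of_le_of_lt ha'gea hs.1, hs.2⟩
    -- the left solution, extended by continuity
    set F : ℝ → ℝ × ℝ := fun s => if s < b then (x s, θ s) else p₁ with hFdef
    have hFlt : ∀ s : ℝ, s < b → F s = (x s, θ s) := fun s hs => if_pos hs
    have hFb : F b = p₁ := if_neg (lt_irrefl b)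
    have hFtend : Tendsto F (nhdsWithin b (Set.Iio b)) (nhds p₁) := by
      refine hpair.congr' ?_
      filter_upwards [self_mem_nhdsWithin] with s hs
      exact (hFlt s hs).symm
    have hFder : ∀ s ∈ Set.Ioo (0:ℝ) b, HasDerivAt F (v (F s)) s := by
      intro s hs
      have hsD : s ∈ D := hmemIoo s hs
      have hd : HasDerivAt (fun u => (x u, θ u))
          (Real.cos (θ s), x s * 𝔎 (Real.cos (θ s)) / Real.sin (θ s)) s :=
        (hsol s hsD).2.2.1.prodMk (hsol s hsD).2.2.2
      have hev : F =ᶠ[nhds s] (fun u => (x u, θ u)) :=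
        eventuallyEq_of_mem (Iio_mem_nhds hs.2) (fun u hu => hFlt u hu)
      have h2 : HasDerivAt F (Real.cos (θ s), x s * 𝔎 (Real.cos (θ s)) / Real.sin (θ s)) s :=
        hd.congr_of_eventuallyEq hev
      have h3 : v (F s) = (Real.cos (θ s), x s * 𝔎 (Real.cos (θ s)) / Real.sin (θ s)) := by
        rw [hFlt s hs.2]
      rw [h3]
      exact h2
    have hFderb : HasDerivWithinAt F (v p₁) (Set.Iic b) b := by
      apply hasDerivWithinAt_Iic_of_tendsto_deriv (s := Set.Ioo a' b)
      · exact fun u hu => (hFder u ⟨lt_of_lt_of_le (by linarith) hu.1.le, hu.2⟩).differentiableAt.differentiableWithinAt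
      · have h2 : Tendsto F (nhdsWithin b (Set.Ioo a' b)) (nhds (F b)) := by
          rw [hFb]; exact hFtend.mono_left (nhdsWithin_mono b fun u hu => hu.2)
        exact h2
      · exact Ioo_mem_nhdsLT ha'b
      · have h1 : Tendsto (fun s => v (x s, θ s)) (nhdsWithin b (Set.Iio b)) (nhds (v p₁)) :=
          (hvc.continuousAt.tendsto).comp hpair
        refine h1.congr' ?_
        filter_upwards [Ioo_mem_nhdsLT ha'b] with s hs
        rw [(hFder s ⟨lt_of_lt_of_le (by linarith) hs.1.le, hs.2⟩).deriv, hFlt s hs.2]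
    have hp₁t : p₁ ∈ tset := mem_of_mem_nhds htmem
    have huniq : Set.EqOn F f (Set.Icc a' b) := by
      apply ODE_solution_unique_of_mem_Icc_left (v := fun _ => v) (s := fun _ => tset)
        (K := K) (fun _ _ => hlip)
      · -- ContinuousOn F (Icc a' b)
        intro u hu
        rcases lt_or_eq_of_le hu.2 with h | h
        · exact ((hFder u ⟨by linarith [hu.1], h⟩).continuousAt).continuousWithinAt
        · subst h
          have h2 : Tendsto F (nhdsWithin u (Set.Iio u)) (nhds (F u)) := by
            rw [hFb]; exact hFtend
          have h3 : Tendsto F (nhdsWithin u {u}) (nhds (F u)) := by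
            rw [nhdsWithin_singleton]
            exact tendsto_pure_nhds F u
          have h4 : Tendsto F (nhdsWithin u (Set.Iio u ∪ {u})) (nhds (F u)) := by
            rw [nhdsWithin_union]; exact tendsto_sup.mpr ⟨h2, h3⟩
          refine h4.mono_left (nhdsWithin_mono u (fun w hw => ?_))
          rcases lt_or_eq_of_le hw.2 with h | h
          · exact Or.inl h
          · exact Or.inr (by simp [h])
      · intro u hu
        rcases lt_or_eq_of_le hu.2 with h | h
        · exact (hFder u ⟨by linarith [hu.1], h⟩).hasDerivWithinAt
        · subst h
          have : v (F u) = v p₁ := by rw [hFb]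
          rw [this]
          exact hFderb
      · intro u hu
        rcases lt_or_eq_of_le hu.2 with h | h
        · rw [hFlt u h]; exact (hmemt u ⟨hu.1, h⟩).1
        · subst h; rw [hFb]; exact hp₁t
      · exact fun u hu => (hfc u ⟨by linarith [le_trans ha'ge1 hu.1], by linarith [hu.2]⟩).continuousWithinAt
      · exact fun u hu => (hf u ⟨by linarith [le_trans ha'ge1 hu.1.le], by linarith [hu.2]⟩).hasDerivWithinAt
      · intro u hu
        rcases lt_or_eq_of_le hu.2 with h | h
        · exact (hmemt u ⟨hu.1, h⟩).2
        · subst h; rw [hfb]; exact hp₁t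
      · rw [hFb, hfb]
    -- positivity of f near b
    have hp₁U : (0:ℝ) < p₁.1 ∧ p₁.2 ∈ Set.Ioo 0 π := by
      refine ⟨lt_trans hx₀ hx₁gt, hθLpos, by linarith [Real.pi_pos]⟩
    have e4 : ∀ᶠ u in nhds b, 0 < (f u).1 ∧ (f u).2 ∈ Set.Ioo 0 π := by
      have hU : IsOpen {p : ℝ × ℝ | 0 < p.1 ∧ p.2 ∈ Set.Ioo 0 π} := by
        refine (isOpen_lt continuous_const continuous_fst).inter ?_
        exact (isOpen_lt continuous_const continuous_snd).inter
          (isOpen_lt continuous_snd continuous_const)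
      exact hcfb.eventually_mem (hU.mem_nhds hp₁U)
    obtain ⟨δ, hδ, hball⟩ := Metric.eventually_nhds_iff_ball.mp e4
    obtain ⟨b', hb'def⟩ : ∃ t : ℝ, t = b + min δ ε / 2 := ⟨_, rfl⟩
    have hminpos : 0 < min δ ε := lt_min hδ hε
    have hbb' : b < b' := by rw [hb'def]; linarith
    have hb'lt : ∀ u : ℝ, b ≤ u → u < b' → dist u b < δ ∧ b - ε < u ∧ u < b + ε := by
      intro u h1 h2
      rw [hb'def] at h2
      refine ⟨?_, by linarith, ?_⟩
      · rw [Real.dist_eq, abs_of_nonneg (by linarith)]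
        calc u - b < min δ ε / 2 := by linarith
          _ < δ := by have := min_le_left δ ε; linarith
      · calc u < b + min δ ε / 2 := h2
          _ < b + ε := by have := min_le_right δ ε; linarith
    set X : ℝ → ℝ := fun u => if u < b then x u else (f u).1 with hXdef
    set Θ : ℝ → ℝ := fun u => if u < b then θ u else (f u).2 with hΘdef
    have hXeq : ∀ u, a' < u → u < b' → X u = (f u).1 := by
      intro u h1 h2
      by_cases h : u < b
      · have h4 : (x u, θ u) = f u := by
          rw [← hFlt u h]; exact huniq ⟨h1.le, h.le⟩
        show (if u < b then x u else (f u).1) = (f u).1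
        rw [if_pos h, ← h4]
      · show (if u < b then x u else (f u).1) = (f u).1
        rw [if_neg h]
    have hΘeq : ∀ u, a' < u → u < b' → Θ u = (f u).2 := by
      intro u h1 h2
      by_cases h : u < b
      · have h4 : (x u, θ u) = f u := by
          rw [← hFlt u h]; exact huniq ⟨h1.le, h.le⟩
        show (if u < b then θ u else (f u).2) = (f u).2
        rw [if_pos h, ← h4]
      · show (if u < b then θ u else (f u).2) = (f u).2
        rw [if_neg h]
    have hsol' : ∀ u ∈ Set.Ico (0:ℝ) b', 0 ≤ X u ∧ Θ u ∈ Set.Ioo 0 π ∧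
        HasDerivAt X (Real.cos (Θ u)) u ∧
        HasDerivAt Θ (X u * 𝔎 (Real.cos (Θ u)) / Real.sin (Θ u)) u := by
      intro u hu
      by_cases h : u < b
      · have huD : u ∈ D := by rw [hDico]; exact ⟨hu.1, h⟩
        obtain ⟨h1, h2, h3, h4⟩ := hsol u huD
        have hXu : X u = x u := if_pos h
        have hΘu : Θ u = θ u := if_pos h
        have hevX : X =ᶠ[nhds u] x :=
          eventuallyEq_of_mem (Iio_mem_nhds h) (fun w hw => if_pos hw)
        have hevΘ : Θ =ᶠ[nhds u] θ :=
          eventuallyEq_of_mem (Iio_mem_nhds h) (fun w hw => if_pos hw)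
        refine ⟨hXu ▸ h1, hΘu ▸ h2, ?_, ?_⟩
        · rw [hΘu]; exact h3.congr_of_eventuallyEq hevX
        · rw [hXu, hΘu]; exact h4.congr_of_eventuallyEq hevΘ
      · push_neg at h
        obtain ⟨hd1, hd2, hd3⟩ := hb'lt u h hu.2
        have hdf := hf u ⟨hd2, hd3⟩
        have hfU := hball u hd1
        have hXu : X u = (f u).1 := if_neg (not_lt.mpr h)
        have hΘu : Θ u = (f u).2 := if_neg (not_lt.mpr h)
        have hau : a' < u := lt_of_lt_of_le ha'b h
        have hevX : X =ᶠ[nhds u] (fun w => (f w).1) :=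
          eventuallyEq_of_mem (Ioo_mem_nhds hau hu.2) (fun w hw => hXeq w hw.1 hw.2)
        have hevΘ : Θ =ᶠ[nhds u] (fun w => (f w).2) :=
          eventuallyEq_of_mem (Ioo_mem_nhds hau hu.2) (fun w hw => hΘeq w hw.1 hw.2)
        have hc1 : HasDerivAt (fun w => (f w).1) (Real.cos ((f u).2)) u := by
          have := (ContinuousLinearMap.fst ℝ ℝ ℝ).hasFDerivAt.comp_hasDerivAt u hdf
          exact this
        have hc2 : HasDerivAt (fun w => (f w).2)
            ((f u).1 * 𝔎 (Real.cos ((f u).2)) / Real.sin ((f u).2)) u := by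
          have := (ContinuousLinearMap.snd ℝ ℝ ℝ).hasFDerivAt.comp_hasDerivAt u hdf
          exact this
        refine ⟨?_, ?_, ?_, ?_⟩
        · rw [hXu]; exact hfU.1.le
        · rw [hΘu]; exact hfU.2
        · rw [hΘu]; exact hc1.congr_of_eventuallyEq hevX
        · rw [hXu, hΘu]; exact hc2.congr_of_eventuallyEq hevΘ
    have hfinal := hmax X Θ (Set.Ico 0 b')
      (by rw [hDico]; exact Set.Ico_subset_Ico_right hbb'.le)
      (Or.inr ⟨b', by linarith, rfl⟩) hsol'
      (fun u hu => (if_pos (by rw [hDico] at hu; exact hu.2)).symm)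
      (fun u hu => (if_pos (by rw [hDico] at hu; exact hu.2)).symm)
    rw [hDico] at hfinal
    have hbmem : b ∈ Set.Ico (0:ℝ) b := by rw [← hfinal]; exact ⟨hb.le, hbb'⟩
    exact lt_irrefl b hbmem.2
  exact ⟨nhdsWithin b (Set.Iio b), Or.inr ⟨b, hb, rfl⟩, hθL_eq ▸ hθtend,
    sSup (x '' Set.Ioo 0 b), hx₁gt, hxtend⟩
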